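/- Averaged-power comparison along a segment: Let γ > 1. There exist constants 0 < c ≤ C, depending only on γ, such that for all real a, b ≥ 0 with a + b > 0: c (a + b)^{γ−2} ≤ ∫_0^1 (b + θ(a − b))^{γ−2} dθ ≤ C (a + b)^{γ−2}. (For 1 < γ < 2 the integrand may be unbounded at an endpoint when a = 0 or b = 0, but the integral is finite.) -/

import Mathlib

open MeasureTheory Set

noncomputable section

/-- Averaged-power comparison along a segment: for `γ > 1` there are constants
`0 < c ≤ C` depending only on `γ` such that for all `a, b ≥ 0` with `a + b > 0`,
`c (a + b)^{γ−2} ≤ ∫_0^1 (b + θ(a − b))^{γ−2} dθ ≤ C (a + b)^{γ−2}`. -/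
theorem segment_average_power_comparison (γ : ℝ) (hγ : 1 < γ) :
    ∃ c C : ℝ, 0 < c ∧ c ≤ C ∧
      ∀ a b : ℝ, 0 ≤ a → 0 ≤ b → 0 < a + b →
        c * (a + b) ^ (γ - 2)
            ≤ (∫ θ in Ioo (0:ℝ) 1, (b + θ * (a - b)) ^ (γ - 2)) ∧
        (∫ θ in Ioo (0:ℝ) 1, (b + θ * (a - b)) ^ (γ - 2))
            ≤ C * (a + b) ^ (γ - 2) := by
  set s := γ - 2 with hs_def
  have hs : -1 < s := by simp only [hs_def]; linarith
  set m : ℝ → ℝ := fun θ => (min θ (1 - θ)) ^ s with hm_def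
  have hmin_pos : ∀ θ ∈ Ioo (0:ℝ) 1, 0 < min θ (1 - θ) := by
    intro θ hθ
    exact lt_min hθ.1 (by linarith [hθ.2])
  have hm_nonneg : ∀ θ ∈ Ioo (0:ℝ) 1, 0 ≤ m θ :=
    fun θ hθ => Real.rpow_nonneg (hmin_pos θ hθ).le s
  have hm_meas : AEStronglyMeasurable m (volume.restrict (Ioo (0:ℝ) 1)) := by
    apply ContinuousOn.aestronglyMeasurable _ measurableSet_Ioo
    apply ContinuousOn.rpow_const
    · exact (continuous_id.min (continuous_const.sub continuous_id)).continuousOn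
    · exact fun x hx => Or.inl (hmin_pos x hx).ne'
  have h1 : IntegrableOn (fun θ : ℝ => θ ^ s) (Ioo (0:ℝ) 1) := by
    have h := intervalIntegral.intervalIntegrable_rpow' (a := (0:ℝ)) (b := 1) hs
    rw [intervalIntegrable_iff_integrableOn_Ioc_of_le zero_le_one] at h
    exact h.mono_set Ioo_subset_Ioc_self
  have h2 : IntegrableOn (fun θ : ℝ => (1 - θ) ^ s) (Ioo (0:ℝ) 1) := by
    have h := (intervalIntegral.intervalIntegrable_rpow' (a := (0:ℝ)) (b := 1) hs).comp_sub_left 1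
    simp only [sub_zero, sub_self] at h
    have h' := h.symm
    rw [intervalIntegrable_iff_integrableOn_Ioc_of_le zero_le_one] at h'
    exact h'.mono_set Ioo_subset_Ioc_self
  have hm_int : IntegrableOn m (Ioo (0:ℝ) 1) := by
    apply Integrable.mono' (h1.add h2) hm_meas
    filter_upwards [ae_restrict_mem measurableSet_Ioo] with θ hθ
    rw [Real.norm_eq_abs, abs_of_nonneg (hm_nonneg θ hθ)]
    have hθ1 : (0:ℝ) ≤ θ := hθ.1.le
    have hθ2 : (0:ℝ) ≤ 1 - θ := by linarith [hθ.2]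
    have e1 : (0:ℝ) ≤ θ ^ s := Real.rpow_nonneg hθ1 s
    have e2 : (0:ℝ) ≤ (1 - θ) ^ s := Real.rpow_nonneg hθ2 s
    rcases min_cases θ (1 - θ) with ⟨h, _⟩ | ⟨h, _⟩ <;>
      simp only [hm_def, h, Pi.add_apply] <;> linarith
  set I : ℝ := ∫ θ in Ioo (0:ℝ) 1, m θ with hI_def
  have hI_pos : 0 < I := by
    rw [hI_def]
    rw [setIntegral_pos_iff_support_of_nonneg_ae _ hm_int]
    · have hsub : Ioo (0:ℝ) 1 ⊆ Function.support m := by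
        intro θ hθ
        exact (Real.rpow_pos_of_pos (hmin_pos θ hθ) s).ne'
      rw [Set.inter_eq_self_of_subset_right hsub]
      simp [Real.volume_Ioo]
    · filter_upwards [ae_restrict_mem measurableSet_Ioo] with θ hθ using hm_nonneg θ hθ
  refine ⟨min 1 I, max 1 I, lt_min one_pos hI_pos, min_le_max, ?_⟩
  intro a b ha hb hab
  set K : ℝ := (a + b) ^ s with hK_def
  have hK : 0 < K := Real.rpow_pos_of_pos hab s
  set f : ℝ → ℝ := fun θ => (b + θ * (a - b)) ^ s with hf_def
  -- base estimates
  have hx_pos : ∀ θ ∈ Ioo (0:ℝ) 1, 0 < b + θ * (a - b) := by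
    intro θ hθ
    have h2 := hmin_pos θ hθ
    have h3 : min θ (1 - θ) ≤ θ := min_le_left _ _
    have h4 : min θ (1 - θ) ≤ 1 - θ := min_le_right _ _
    nlinarith
  have hx_lb : ∀ θ ∈ Ioo (0:ℝ) 1, min θ (1 - θ) * (a + b) ≤ b + θ * (a - b) := by
    intro θ hθ
    have h3 : min θ (1 - θ) ≤ θ := min_le_left _ _
    have h4 : min θ (1 - θ) ≤ 1 - θ := min_le_right _ _
    nlinarith
  have hx_ub : ∀ θ ∈ Ioo (0:ℝ) 1, b + θ * (a - b) ≤ a + b := by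
    intro θ hθ
    nlinarith [hθ.1, hθ.2]
  have hmul : ∀ θ ∈ Ioo (0:ℝ) 1, (min θ (1 - θ) * (a + b)) ^ s = m θ * K := by
    intro θ hθ
    rw [Real.mul_rpow (hmin_pos θ hθ).le hab.le]
  -- pointwise comparisons
  have hpt1 : 0 ≤ s → ∀ θ ∈ Ioo (0:ℝ) 1, m θ * K ≤ f θ ∧ f θ ≤ K := by
    intro hsgn θ hθ
    constructor
    · rw [← hmul θ hθ]
      exact Real.rpow_le_rpow (mul_nonneg (hmin_pos θ hθ).le hab.le) (hx_lb θ hθ) hsgn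
    · exact Real.rpow_le_rpow (hx_pos θ hθ).le (hx_ub θ hθ) hsgn
  have hpt2 : s ≤ 0 → ∀ θ ∈ Ioo (0:ℝ) 1, K ≤ f θ ∧ f θ ≤ m θ * K := by
    intro hsgn θ hθ
    constructor
    · exact Real.rpow_le_rpow_of_nonpos (hx_pos θ hθ) (hx_ub θ hθ) hsgn
    · rw [← hmul θ hθ]
      exact Real.rpow_le_rpow_of_nonpos (mul_pos (hmin_pos θ hθ) hab) (hx_lb θ hθ) hsgn
  -- integrability of f
  have hmK_int : IntegrableOn (fun θ => m θ * K) (Ioo (0:ℝ) 1) := hm_int.mul_const K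
  have hK_int : IntegrableOn (fun _ : ℝ => K) (Ioo (0:ℝ) 1) :=
    integrableOn_const (by simp [Real.volume_Ioo])
  have hf_meas : AEStronglyMeasurable f (volume.restrict (Ioo (0:ℝ) 1)) := by
    apply ContinuousOn.aestronglyMeasurable _ measurableSet_Ioo
    apply ContinuousOn.rpow_const
    · exact (continuous_const.add (continuous_id.mul continuous_const)).continuousOn
    · exact fun x hx => Or.inl (hx_pos x hx).ne'
  have hf_int : IntegrableOn f (Ioo (0:ℝ) 1) := by
    apply Integrable.mono' (hmK_int.add hK_int) hf_meas
    filter_upwards [ae_restrict_mem measurableSet_Ioo] with θ hθ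
    rw [Real.norm_eq_abs, abs_of_nonneg (Real.rpow_nonneg (hx_pos θ hθ).le s)]
    simp only [Pi.add_apply]
    have h6 : (0:ℝ) ≤ m θ * K := mul_nonneg (hm_nonneg θ hθ) hK.le
    rcases le_or_gt 0 s with hsgn | hsgn
    · have := (hpt1 hsgn θ hθ).2; linarith
    · have := (hpt2 hsgn.le θ hθ).2; linarith
  -- integrals of bounds
  have hint_mK : (∫ θ in Ioo (0:ℝ) 1, m θ * K) = I * K := by
    rw [hI_def, ← integral_mul_const]
  have hint_K : (∫ _ in Ioo (0:ℝ) 1, K) = K := by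
    simp [Real.volume_Ioo]
  constructor
  · rcases le_or_gt 0 s with hsgn | hsgn
    · have h7 : (∫ θ in Ioo (0:ℝ) 1, m θ * K) ≤ ∫ θ in Ioo (0:ℝ) 1, f θ :=
        setIntegral_mono_on hmK_int hf_int measurableSet_Ioo
          (fun θ hθ => (hpt1 hsgn θ hθ).1)
      rw [hint_mK] at h7
      have h8 : min 1 I * K ≤ I * K :=
        mul_le_mul_of_nonneg_right (min_le_right 1 I) hK.le
      linarith
    · have h7 : (∫ _ in Ioo (0:ℝ) 1, K) ≤ ∫ θ in Ioo (0:ℝ) 1, f θ :=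
        setIntegral_mono_on hK_int hf_int measurableSet_Ioo
          (fun θ hθ => (hpt2 hsgn.le θ hθ).1)
      rw [hint_K] at h7
      have h8 : min 1 I * K ≤ 1 * K :=
        mul_le_mul_of_nonneg_right (min_le_left 1 I) hK.le
      linarith
  · rcases le_or_gt 0 s with hsgn | hsgn
    · have h7 : (∫ θ in Ioo (0:ℝ) 1, f θ) ≤ ∫ _ in Ioo (0:ℝ) 1, K :=
        setIntegral_mono_on hf_int hK_int measurableSet_Ioo
          (fun θ hθ => (hpt1 hsgn θ hθ).2)
      rw [hint_K] at h7
      have h8 : 1 * K ≤ max 1 I * K :=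
        mul_le_mul_of_nonneg_right (le_max_left 1 I) hK.le
      linarith
    · have h7 : (∫ θ in Ioo (0:ℝ) 1, f θ) ≤ ∫ θ in Ioo (0:ℝ) 1, m θ * K :=
        setIntegral_mono_on hf_int hmK_int measurableSet_Ioo
          (fun θ hθ => (hpt2 hsgn.le θ hθ).2)
      rw [hint_mK] at h7
      have h8 : I * K ≤ max 1 I * K :=
        mul_le_mul_of_nonneg_right (le_max_right 1 I) hK.le
      linarith
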